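/- The vector space of polynomials Q(x,q) = Σ_{i=1}^k A_i(q) x^i (over the field of rational functions in q) satisfying (1-q/x)Q(x) + x^k(1-qx)Q(1/x) = (1+x^k)(A_k(q) - q A_1(q)) has dimension ⌊(k+1)/2⌋, with explicit basis: for k = 2a, the polynomials E_{j,k}(x;q) = Σ_{i=1}^j (q^{2j-i} x^i + q^{i-1} x^{2a+1-i}) for 1 ≤ j ≤ a; for k = 2a-1, the polynomials O_{j,k}(x;q) = Σ_{i=1}^j (q^{2j-i} x^i + q^{i-1} x^{2a-i}) for 1 ≤ j ≤ a-1, together with O_{a,k}(x;q) = Σ_{i=1}^{a-1} q^{2a-i-1} x^i + Σ_{i=1}^a q^{i-1} x^{2a-i}. -/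

import Mathlib

open Polynomial Finset

noncomputable section

abbrev K : Type := RatFunc ℚ

def qq : K := RatFunc.X

/-- The set of polynomials Q(x) = Σ_{i=1}^k A_i x^i (zero constant term, degree
at most k) satisfying the functional equation
(1-q/x)Q(x) + x^k(1-qx)Q(1/x) = (1+x^k)(A_k - qA_1). -/
def FEset (k : ℕ) : Set (Polynomial K) :=
  {Q : Polynomial K |
    Q.coeff 0 = 0 ∧ Q.natDegree ≤ k ∧
      ∀ x : K, x ≠ 0 →
        (1 - qq / x) * Q.eval x + x ^ k * (1 - qq * x) * Q.eval x⁻¹ =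
          (1 + x ^ k) * (Q.coeff k - qq * Q.coeff 1)}

/-- The basis family: for k = 2a the polynomials
E_{j,k} = Σ_{i=1}^j (q^{2j-i} x^i + q^{i-1} x^{2a+1-i}), 1 ≤ j ≤ a; for
k = 2a-1 the polynomials O_{j,k} = Σ_{i=1}^j (q^{2j-i} x^i + q^{i-1} x^{2a-i})
for 1 ≤ j ≤ a-1 together with
O_{a,k} = Σ_{i=1}^{a-1} q^{2a-i-1} x^i + Σ_{i=1}^a q^{i-1} x^{2a-i}.
(In both cases the second exponent is k + 1 - i, and there are ⌊(k+1)/2⌋ of them.) -/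
def Bfun (k : ℕ) (j : Fin ((k + 1) / 2)) : Polynomial K :=
  if k % 2 = 1 ∧ j.val + 1 = (k + 1) / 2 then
    ∑ i ∈ Finset.Icc 1 ((k + 1) / 2 - 1), Polynomial.C (qq ^ (k - i)) * Polynomial.X ^ i +
      ∑ i ∈ Finset.Icc 1 ((k + 1) / 2), Polynomial.C (qq ^ (i - 1)) * Polynomial.X ^ (k + 1 - i)
  else
    ∑ i ∈ Finset.Icc 1 (j.val + 1),
      (Polynomial.C (qq ^ (2 * (j.val + 1) - i)) * Polynomial.X ^ i +
        Polynomial.C (qq ^ (i - 1)) * Polynomial.X ^ (k + 1 - i))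

noncomputable instance : Infinite K := Infinite.of_injective _ (RatFunc.algebraMap_injective ℚ)
instance : CharZero K := charZero_of_injective_algebraMap (algebraMap ℚ K).injective

lemma qq_ne_zero : qq ≠ 0 := RatFunc.X_ne_zero

def qstar (k : ℕ) (Q : Polynomial K) : Polynomial K :=
  ∑ i ∈ Finset.range (k+1), Polynomial.C (Q.coeff (k - i)) * Polynomial.X ^ i

lemma qstar_coeff (k : ℕ) (Q : Polynomial K) (n : ℕ) :
    (qstar k Q).coeff n = if n ≤ k then Q.coeff (k - n) else 0 := by
  simp only [qstar, finset_sum_coeff, coeff_C_mul, coeff_X_pow, mul_ite, mul_one, mul_zero]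
  rw [Finset.sum_ite_eq (Finset.range (k+1)) n]
  simp [Nat.lt_succ_iff]

lemma qstar_eval (k : ℕ) (Q : Polynomial K) (hQ : Q.natDegree ≤ k) (x : K) (hx : x ≠ 0) :
    (qstar k Q).eval x = x ^ k * Q.eval x⁻¹ := by
  rw [Polynomial.eval_eq_sum_range' (Nat.lt_succ_of_le hQ) x⁻¹, Finset.mul_sum, qstar]
  rw [← Finset.sum_range_reflect (fun i => x ^ k * (Q.coeff i * x⁻¹ ^ i)) (k+1)]
  simp only [eval_finset_sum, eval_mul, eval_C, eval_pow, eval_X]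
  refine Finset.sum_congr rfl fun i hi => ?_
  simp only [Finset.mem_range, Nat.lt_succ_iff] at hi
  have h1 : k + 1 - 1 - i = k - i := by omega
  rw [h1]
  have h2 : x ^ k = x ^ (k - i) * x ^ i := by rw [← pow_add]; congr 1; omega
  rw [h2]
  field_simp
  rw [mul_assoc, ← mul_pow, mul_one_div_cancel hx, one_pow, mul_one]

def Pform (k : ℕ) (Q : Polynomial K) : Polynomial K :=
  Q * X - C qq * Q + qstar k Q * X - C qq * (qstar k Q * X ^ 2)
    - monomial 1 (Q.coeff k - qq * Q.coeff 1) - monomial (k+1) (Q.coeff k - qq * Q.coeff 1)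

lemma Pform_coeff (k : ℕ) (Q : Polynomial K) (n : ℕ) :
    (Pform k Q).coeff n =
      (if 1 ≤ n then Q.coeff (n-1) else 0) - qq * Q.coeff n
      + (if 1 ≤ n then (qstar k Q).coeff (n-1) else 0)
      - qq * (if 2 ≤ n then (qstar k Q).coeff (n-2) else 0)
      - (if n = 1 then (Q.coeff k - qq * Q.coeff 1) else 0)
      - (if n = k+1 then (Q.coeff k - qq * Q.coeff 1) else 0) := by
  simp only [Pform, coeff_sub, coeff_add, coeff_C_mul, coeff_mul_X_pow', coeff_monomial, pow_one]
  have : (Q * X).coeff n = if 1 ≤ n then Q.coeff (n-1) else 0 := by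
    rw [← pow_one (X : Polynomial K), coeff_mul_X_pow']
  have this2 : (qstar k Q * X).coeff n = if 1 ≤ n then (qstar k Q).coeff (n-1) else 0 := by
    rw [← pow_one (X : Polynomial K), coeff_mul_X_pow']
  rw [this, this2]
  congr 1
  · congr 1
    exact if_congr eq_comm rfl rfl
  · exact if_congr eq_comm rfl rfl

lemma Pform_eval (k : ℕ) (Q : Polynomial K) (hQ : Q.natDegree ≤ k) (x : K) (hx : x ≠ 0) :
    (Pform k Q).eval x =
      x * ((1 - qq / x) * Q.eval x + x ^ k * (1 - qq * x) * Q.eval x⁻¹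
        - (1 + x ^ k) * (Q.coeff k - qq * Q.coeff 1)) := by
  simp only [Pform, eval_sub, eval_add, eval_mul, eval_C, eval_X, eval_pow, eval_monomial,
    qstar_eval k Q hQ x hx]
  field_simp
  ring

def Rec (k : ℕ) (Q : Polynomial K) : Prop :=
  ∀ s, 1 ≤ s → s < k → Q.coeff s + Q.coeff (k - s) = qq * (Q.coeff (s+1) + Q.coeff (k+1-s))

lemma Pform_eq_zero_iff (k : ℕ) (hk : 1 ≤ k) (Q : Polynomial K)
    (hQ0 : Q.coeff 0 = 0) (hdeg : Q.natDegree ≤ k) :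
    Pform k Q = 0 ↔ Rec k Q := by
  have hz : ∀ N, k < N → Q.coeff N = 0 := Polynomial.natDegree_le_iff_coeff_eq_zero.mp hdeg
  constructor
  · intro h s hs1 hsk
    have h1 := Pform_coeff k Q (s+1)
    rw [h, Polynomial.coeff_zero] at h1
    rw [qstar_coeff, qstar_coeff] at h1
    have e1 : s + 1 - 1 = s := by omega
    have e2 : s + 1 - 2 = s - 1 := by omega
    rw [e1, e2] at h1
    rw [if_pos (by omega : 1 ≤ s + 1), if_pos (by omega : 2 ≤ s + 1),
      if_pos (by omega : s ≤ k), if_pos (by omega : s - 1 ≤ k),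
      if_neg (by omega : ¬ s + 1 = 1), if_neg (by omega : ¬ s + 1 = k + 1)] at h1
    have e3 : k - (s - 1) = k + 1 - s := by omega
    rw [e3] at h1
    rw [if_pos (by omega : 1 ≤ s + 1)] at h1
    linear_combination -h1
  · intro h
    ext n
    rw [Polynomial.coeff_zero, Pform_coeff, qstar_coeff, qstar_coeff]
    match n with
    | 0 => simp [hQ0]
    | 1 =>
      rw [if_pos le_rfl, if_neg (by omega : ¬ (2:ℕ) ≤ 1), if_pos rfl,
        if_neg (by omega : ¬ (1:ℕ) = k + 1), if_pos (by omega : 1 - 1 ≤ k)]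
      simp only [Nat.sub_self, Nat.sub_zero]
      rw [if_pos (le_refl 1), hQ0]
      ring
    | (s+2) =>
      rw [if_pos (by omega : 1 ≤ s + 2), if_pos (by omega : 2 ≤ s + 2),
        if_neg (by omega : ¬ s + 2 = 1)]
      have e1 : s + 2 - 1 = s + 1 := by omega
      have e2 : s + 2 - 2 = s := by omega
      rw [e1, e2]
      by_cases hc1 : s + 1 < k
      · rw [if_pos (by omega : s + 1 ≤ k), if_pos (by omega : s ≤ k),
          if_neg (by omega : ¬ s + 2 = k + 1)]
        have := h (s+1) (by omega) hc1
        have e3 : k - (s+1) = k - s - 1 := by omega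
        have e4 : k + 1 - (s + 1) = k - s := by omega
        rw [e3, e4] at this
        rw [if_pos (by omega : 1 ≤ s + 2), show k - (s+1) = k - s - 1 by omega]
        linear_combination this
      · by_cases hc2 : s + 1 = k
        · rw [if_pos (by omega : s + 1 ≤ k), if_pos (by omega : s ≤ k),
            if_pos (by omega : s + 2 = k + 1)]
          have e3 : k - (s+1) = 0 := by omega
          have e4 : k - s = 1 := by omega
          have e5 : s + 2 = k + 1 := by omega
          rw [e3, e4, e5, hz (k+1) (by omega), hQ0, ite_self, hc2]
          ring
        · rw [if_neg (by omega : ¬ s + 1 ≤ k), if_neg (by omega : ¬ s + 2 = k + 1),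
            hz (s+2) (by omega)]
          by_cases hc3 : s ≤ k
          · rw [if_pos hc3]
            have : s = k := by omega
            rw [this, Nat.sub_self, hQ0, ite_self, hz (k+1) (by omega)]
            ring
          · rw [if_neg hc3, ite_self, hz (s+1) (by omega)]
            ring

lemma mem_FEset_iff (k : ℕ) (hk : 1 ≤ k) (Q : Polynomial K) :
    Q ∈ FEset k ↔ Q.coeff 0 = 0 ∧ Q.natDegree ≤ k ∧ Rec k Q := by
  constructor
  · rintro ⟨h0, hd, hfe⟩
    refine ⟨h0, hd, ?_⟩
    rw [← Pform_eq_zero_iff k hk Q h0 hd]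
    apply Polynomial.eq_zero_of_infinite_isRoot
    refine Set.Infinite.mono (s := {x : K | x ≠ 0}) ?_
      (Set.infinite_of_finite_compl (by simp))
    intro x hx
    have hx' : x ≠ 0 := hx
    simp only [Set.mem_setOf_eq, Polynomial.IsRoot.def]
    rw [Pform_eval k Q hd x hx', hfe x hx', sub_self, mul_zero]
  · rintro ⟨h0, hd, hrec⟩
    refine ⟨h0, hd, fun x hx => ?_⟩
    have hp : Pform k Q = 0 := (Pform_eq_zero_iff k hk Q h0 hd).mpr hrec
    have h1 := Pform_eval k Q hd x hx
    rw [hp, eval_zero] at h1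
    exact sub_eq_zero.mp ((mul_eq_zero.mp h1.symm).resolve_left hx)

lemma coeff_sum1 (c : ℕ → K) (a b n : ℕ) :
    (∑ i ∈ Finset.Icc a b, C (c i) * X ^ i).coeff n = if a ≤ n ∧ n ≤ b then c n else 0 := by
  simp only [finset_sum_coeff, coeff_C_mul, coeff_X_pow, mul_ite, mul_one, mul_zero]
  rw [Finset.sum_ite_eq (Finset.Icc a b) n]
  simp [Finset.mem_Icc]

lemma coeff_sum2 (c : ℕ → K) (k b n : ℕ) (hb : b ≤ k) :
    (∑ i ∈ Finset.Icc 1 b, C (c i) * X ^ (k + 1 - i)).coeff n =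
      if k + 1 - b ≤ n ∧ n ≤ k then c (k + 1 - n) else 0 := by
  simp only [finset_sum_coeff, coeff_C_mul, coeff_X_pow, mul_ite, mul_one, mul_zero]
  by_cases h : k + 1 - b ≤ n ∧ n ≤ k
  · rw [if_pos h, Finset.sum_eq_single (k + 1 - n)]
    · rw [if_pos (by omega)]
    · intro i hi hne
      rw [Finset.mem_Icc] at hi
      rw [if_neg (by omega)]
    · intro hni
      rw [Finset.mem_Icc] at hni
      omega
  · rw [if_neg h, Finset.sum_eq_zero]
    intro i hi
    rw [Finset.mem_Icc] at hi
    rw [if_neg (by omega)]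

def BA (k : ℕ) (j : ℕ) (n : ℕ) : K :=
  if k % 2 = 1 ∧ j + 1 = (k + 1) / 2 then (if 1 ≤ n ∧ n ≤ k then qq ^ (k - n) else 0)
  else (if 1 ≤ n ∧ n ≤ j + 1 then qq ^ (2 * (j + 1) - n) else 0)
    + (if k + 1 - (j + 1) ≤ n ∧ n ≤ k then qq ^ (k - n) else 0)

lemma coeff_Bfun (k : ℕ) (hk : 1 ≤ k) (j : Fin ((k + 1) / 2)) (n : ℕ) :
    (Bfun k j).coeff n = BA k j.val n := by
  have hj : j.val + 1 ≤ (k + 1) / 2 := j.isLt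
  rw [Bfun, BA]
  by_cases hsp : k % 2 = 1 ∧ j.val + 1 = (k + 1) / 2
  · rw [if_pos hsp, if_pos hsp, coeff_add, coeff_sum1,
      coeff_sum2 (fun i => qq ^ (i - 1)) k ((k+1)/2) n (by omega)]
    by_cases h1 : 1 ≤ n ∧ n ≤ (k + 1) / 2 - 1
    · rw [if_pos h1, if_neg (by omega), if_pos (by omega), add_zero]
    · rw [if_neg h1]
      by_cases h2 : k + 1 - (k + 1) / 2 ≤ n ∧ n ≤ k
      · rw [if_pos h2, if_pos (by omega), zero_add]
        congr 1
        omega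
      · rw [if_neg h2, if_neg (by omega), add_zero]
  · rw [if_neg hsp, if_neg hsp]
    rw [Finset.sum_add_distrib, coeff_add, coeff_sum1,
      coeff_sum2 (fun i => qq ^ (i - 1)) k (j.val + 1) n (by omega)]
    congr 1
    by_cases h2 : k + 1 - (j.val + 1) ≤ n ∧ n ≤ k
    · rw [if_pos h2, if_pos h2]
      congr 1
      omega
    · rw [if_neg h2, if_neg h2]

lemma LH_rec (J k s : ℕ) (h2J : 2 * J ≤ k) (hJ1 : 1 ≤ J) (hs1 : 1 ≤ s) (hsk : s < k) :
    ((if 1 ≤ s ∧ s ≤ J then qq ^ (2 * J - s) else 0)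
      + (if k + 1 - J ≤ s ∧ s ≤ k then qq ^ (k - s) else 0))
    + ((if 1 ≤ k - s ∧ k - s ≤ J then qq ^ (2 * J - (k - s)) else 0)
      + (if k + 1 - J ≤ k - s ∧ k - s ≤ k then qq ^ (k - (k - s)) else 0))
    = qq * (((if 1 ≤ s + 1 ∧ s + 1 ≤ J then qq ^ (2 * J - (s + 1)) else 0)
      + (if k + 1 - J ≤ s + 1 ∧ s + 1 ≤ k then qq ^ (k - (s + 1)) else 0))
    + ((if 1 ≤ k + 1 - s ∧ k + 1 - s ≤ J then qq ^ (2 * J - (k + 1 - s)) else 0)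
      + (if k + 1 - J ≤ k + 1 - s ∧ k + 1 - s ≤ k then qq ^ (k - (k + 1 - s)) else 0))) := by
  by_cases c1 : s < J
  · rw [if_pos (by omega), if_neg (by omega), if_neg (by omega), if_pos (by omega),
      if_pos (by omega), if_neg (by omega), if_neg (by omega), if_pos (by omega),
      show 2 * J - s = (2 * J - (s + 1)) + 1 by omega,
      show k - (k - s) = (k - (k + 1 - s)) + 1 by omega, pow_succ, pow_succ]
    ring
  · by_cases c2 : s = J
    · by_cases c3 : 2 * J = k
      · rw [if_pos (by omega), if_neg (by omega), if_pos (by omega), if_neg (by omega),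
          if_neg (by omega), if_pos (by omega), if_neg (by omega), if_pos (by omega),
          show 2 * J - s = (k - (s + 1)) + 1 by omega,
          show 2 * J - (k - s) = (k - (k + 1 - s)) + 1 by omega, pow_succ, pow_succ]
        ring
      · rw [if_pos (by omega), if_neg (by omega), if_neg (by omega), if_neg (by omega),
          if_neg (by omega), if_neg (by omega), if_neg (by omega), if_pos (by omega),
          show 2 * J - s = (k - (k + 1 - s)) + 1 by omega, pow_succ]
        ring
    · by_cases c4 : s < k - J
      · rw [if_neg (by omega), if_neg (by omega), if_neg (by omega), if_neg (by omega),
          if_neg (by omega), if_neg (by omega), if_neg (by omega), if_neg (by omega)]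
        ring
      · by_cases c5 : s = k - J
        · rw [if_neg (by omega), if_neg (by omega), if_pos (by omega), if_neg (by omega),
            if_neg (by omega), if_pos (by omega), if_neg (by omega), if_neg (by omega),
            show 2 * J - (k - s) = (k - (s + 1)) + 1 by omega, pow_succ]
          ring
        · rw [if_neg (by omega), if_pos (by omega), if_pos (by omega), if_neg (by omega),
            if_neg (by omega), if_pos (by omega), if_pos (by omega), if_neg (by omega),
            show 2 * J - (k - s) = (2 * J - (k + 1 - s)) + 1 by omega,
            show k - s = (k - (s + 1)) + 1 by omega, pow_succ, pow_succ]
          ring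

lemma BA_rec (k : ℕ) (hk : 1 ≤ k) (j : ℕ) (hj : j + 1 ≤ (k + 1) / 2)
    (s : ℕ) (hs1 : 1 ≤ s) (hsk : s < k) :
    BA k j s + BA k j (k - s) = qq * (BA k j (s + 1) + BA k j (k + 1 - s)) := by
  by_cases hsp : k % 2 = 1 ∧ j + 1 = (k + 1) / 2
  · simp only [BA, if_pos hsp]
    rw [if_pos (by omega), if_pos (by omega), if_pos (by omega), if_pos (by omega),
      show k - (k - s) = (k - (k + 1 - s)) + 1 by omega,
      show k - s = (k - (s + 1)) + 1 by omega, pow_succ, pow_succ]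
    ring
  · simp only [BA, if_neg hsp]
    exact LH_rec (j + 1) k s (by omega) (by omega) hs1 hsk

lemma BA_zero (k : ℕ) (hk : 1 ≤ k) (j : ℕ) (hj : j + 1 ≤ (k + 1) / 2) : BA k j 0 = 0 := by
  rw [BA]
  by_cases hsp : k % 2 = 1 ∧ j + 1 = (k + 1) / 2
  · rw [if_pos hsp, if_neg (by omega)]
  · rw [if_neg hsp, if_neg (by omega), if_neg (by omega), add_zero]

lemma BA_high (k : ℕ) (hk : 1 ≤ k) (j : ℕ) (hj : j + 1 ≤ (k + 1) / 2) (n : ℕ) (hn : k < n) :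
    BA k j n = 0 := by
  rw [BA]
  by_cases hsp : k % 2 = 1 ∧ j + 1 = (k + 1) / 2
  · rw [if_pos hsp, if_neg (by omega)]
  · rw [if_neg hsp, if_neg (by omega), if_neg (by omega), add_zero]

lemma BA_diag (k : ℕ) (hk : 1 ≤ k) (j : ℕ) (hj : j + 1 ≤ (k + 1) / 2) :
    BA k j (j + 1) ≠ 0 := by
  rw [BA]
  by_cases hsp : k % 2 = 1 ∧ j + 1 = (k + 1) / 2
  · rw [if_pos hsp, if_pos (by omega)]
    exact pow_ne_zero _ qq_ne_zero
  · rw [if_neg hsp, if_pos (by omega), if_neg (by omega), add_zero]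
    exact pow_ne_zero _ qq_ne_zero

lemma BA_offdiag (k : ℕ) (hk : 1 ≤ k) (j j' : ℕ) (hj : j + 1 ≤ (k + 1) / 2)
    (hj' : j' + 1 ≤ (k + 1) / 2) (hlt : j < j') : BA k j (j' + 1) = 0 := by
  rw [BA]
  by_cases hsp : k % 2 = 1 ∧ j + 1 = (k + 1) / 2
  · omega
  · rw [if_neg hsp, if_neg (by omega), if_neg (by omega), add_zero]

def FEsub (k : ℕ) : Submodule K (Polynomial K) where
  carrier := {Q | Q.coeff 0 = 0 ∧ (∀ N, k < N → Q.coeff N = 0) ∧ Rec k Q}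
  add_mem' := by
    rintro a b ⟨a0, ad, ar⟩ ⟨b0, bd, br⟩
    refine ⟨by simp [a0, b0], fun N hN => by simp [ad N hN, bd N hN], fun s h1 h2 => ?_⟩
    simp only [coeff_add]
    linear_combination ar s h1 h2 + br s h1 h2
  zero_mem' := by
    refine ⟨rfl, fun N _ => rfl, fun s h1 h2 => by simp⟩
  smul_mem' := by
    rintro c x ⟨x0, xd, xr⟩
    refine ⟨by simp [x0], fun N hN => by simp [xd N hN], fun s h1 h2 => ?_⟩
    simp only [Polynomial.coeff_smul, smul_eq_mul]
    linear_combination c * xr s h1 h2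

lemma FEset_eq (k : ℕ) (hk : 1 ≤ k) : FEset k = ↑(FEsub k) := by
  ext Q
  rw [mem_FEset_iff k hk Q]
  constructor
  · rintro ⟨h0, hd, hr⟩
    exact ⟨h0, Polynomial.natDegree_le_iff_coeff_eq_zero.mp hd, hr⟩
  · rintro ⟨h0, hd, hr⟩
    exact ⟨h0, Polynomial.natDegree_le_iff_coeff_eq_zero.mpr hd, hr⟩

lemma eq_zero_of_low (k : ℕ) (hk : 1 ≤ k) (Q : Polynomial K) (hQ : Q ∈ FEsub k)
    (hlow : ∀ t, 1 ≤ t → t ≤ (k + 1) / 2 → Q.coeff t = 0) : Q = 0 := by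
  obtain ⟨h0, hd, hr⟩ := hQ
  have key : ∀ n, Q.coeff n = 0 := by
    intro n
    induction n using Nat.strong_induction_on with
    | _ n ih =>
      by_cases hn0 : n = 0
      · rw [hn0]; exact h0
      · by_cases hnm : n ≤ (k + 1) / 2
        · exact hlow n (by omega) hnm
        · by_cases hnk : k < n
          · exact hd n hnk
          · -- (k+1)/2 < n ≤ k
            have hs := hr (n - 1) (by omega) (by omega)
            rw [show n - 1 + 1 = n by omega] at hs
            rw [ih (n - 1) (by omega), ih (k - (n - 1)) (by omega),
              add_zero] at hs
            by_cases hc : k + 1 - (n - 1) = n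
            · rw [hc] at hs
              have h2 : (2 : K) ≠ 0 := two_ne_zero
              have := mul_ne_zero qq_ne_zero h2
              field_simp at hs
              rcases (by simpa [qq_ne_zero] using hs : qq = 0 ∨ Q.coeff n = 0) with h | h
              · exact absurd h qq_ne_zero
              · exact h
            · rw [ih (k + 1 - (n - 1)) (by omega), add_zero] at hs
              rcases mul_eq_zero.mp hs.symm with h | h
              · exact absurd h qq_ne_zero
              · exact h
  ext n
  rw [key n, coeff_zero]

def phi (k : ℕ) : Polynomial K →ₗ[K] (Fin ((k + 1) / 2) → K) :=
  LinearMap.pi fun j => Polynomial.lcoeff K (j.val + 1)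

set_option synthInstance.maxHeartbeats 1000000 in
lemma tri_indep {m : ℕ} (v : Fin m → Fin m → K) (hd : ∀ j, v j j ≠ 0)
    (ho : ∀ i j : Fin m, i < j → v i j = 0) : LinearIndependent K v := by
  rw [Fintype.linearIndependent_iff]
  intro g hg
  have key : ∀ d : ℕ, ∀ j : Fin m, m - j.val ≤ d → g j = 0 := by
    intro d
    induction d with
    | zero => intro j h; exact absurd h (by omega)
    | succ d ihd =>
      intro j hj
      have h0 : ∑ i : Fin m, g i * v i j = 0 := by
        have h1 := congrFun hg j
        rw [Finset.sum_apply] at h1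
        simpa using h1
      rw [Finset.sum_eq_single j] at h0
      · rcases mul_eq_zero.mp h0 with h | h
        · exact h
        · exact absurd h (hd j)
      · intro i _ hne
        rcases lt_or_gt_of_ne hne with hlt | hgt
        · rw [ho i j hlt, mul_zero]
        · rw [ihd i (by omega), zero_mul]
      · intro h; exact absurd (Finset.mem_univ j) h
  exact fun j => key m j (by omega)

lemma Bfun_mem_FEsub (k : ℕ) (hk : 1 ≤ k) (j : Fin ((k + 1) / 2)) :
    Bfun k j ∈ FEsub k := by
  have hj : j.val + 1 ≤ (k + 1) / 2 := j.isLt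
  refine ⟨?_, ?_, ?_⟩
  · rw [coeff_Bfun k hk j 0]; exact BA_zero k hk j.val hj
  · intro N hN; rw [coeff_Bfun k hk j N]; exact BA_high k hk j.val hj N hN
  · intro s h1 h2
    rw [coeff_Bfun k hk j, coeff_Bfun k hk j, coeff_Bfun k hk j, coeff_Bfun k hk j]
    exact BA_rec k hk j.val hj s h1 h2


/-- Theorem 4.4: the space of solutions of the functional equation
is ⌊(k+1)/2⌋-dimensional, with the explicit basis E_{j,k} (k even) or O_{j,k}
(k odd). -/
theorem stmt19 (k : ℕ) (hk : 1 ≤ k) :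
    LinearIndependent K (Bfun k) ∧
      (Submodule.span K (Set.range (Bfun k)) : Set (Polynomial K)) = FEset k ∧
        Module.finrank K (Submodule.span K (Set.range (Bfun k))) = (k + 1) / 2 := by
  have hm1 : 1 ≤ (k + 1) / 2 := by omega
  set m := (k + 1) / 2 with hm
  have hv : ∀ i j : Fin m, (⇑(phi k) ∘ Bfun k) i j = BA k i.val (j.val + 1) := by
    intro i j
    simp only [Function.comp_apply, phi, LinearMap.pi_apply, Polynomial.lcoeff_apply]
    exact coeff_Bfun k hk i (j.val + 1)
  have hvind : LinearIndependent K (⇑(phi k) ∘ Bfun k) := by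
    apply tri_indep
    · intro j
      rw [hv j j]
      exact BA_diag k hk j.val j.isLt
    · intro i j hij
      rw [hv i j]
      exact BA_offdiag k hk i.val j.val i.isLt j.isLt (by exact_mod_cast hij)
  have hind : LinearIndependent K (Bfun k) := LinearIndependent.of_comp (phi k) hvind
  have hspan_le : Submodule.span K (Set.range (Bfun k)) ≤ FEsub k := by
    rw [Submodule.span_le]
    rintro _ ⟨j, rfl⟩
    exact Bfun_mem_FEsub k hk j
  have hle_span : FEsub k ≤ Submodule.span K (Set.range (Bfun k)) := by
    intro Q hQ
    -- surjectivity of phi on the span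
    have htop : Submodule.span K (Set.range (⇑(phi k) ∘ Bfun k)) = ⊤ := by
      have : Nonempty (Fin m) := ⟨⟨0, hm1⟩⟩
      exact hvind.span_eq_top_of_card_eq_finrank
        (by rw [Module.finrank_fintype_fun_eq_card])
    have hmap : Submodule.map (phi k) (Submodule.span K (Set.range (Bfun k))) = ⊤ := by
      rw [Submodule.map_span, ← Set.range_comp, htop]
    have : phi k Q ∈ (⊤ : Submodule K (Fin m → K)) := Submodule.mem_top
    rw [← hmap] at this
    obtain ⟨P, hP, hPQ⟩ := this
    have hQP : Q - P ∈ FEsub k := sub_mem hQ (hspan_le hP)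
    have hlow : ∀ t, 1 ≤ t → t ≤ m → (Q - P).coeff t = 0 := by
      intro t h1 h2
      have := congrFun hPQ ⟨t - 1, by omega⟩
      simp only [phi, LinearMap.pi_apply, Polynomial.lcoeff_apply] at this
      rw [coeff_sub]
      rw [show t - 1 + 1 = t by omega] at this
      rw [this]
      ring
    have : Q - P = 0 := eq_zero_of_low k hk (Q - P) hQP hlow
    have hQeq : Q = P := by rwa [sub_eq_zero] at this
    rw [hQeq]
    exact hP
  have hspan_eq : Submodule.span K (Set.range (Bfun k)) = FEsub k :=
    le_antisymm hspan_le hle_span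
  refine ⟨hind, ?_, ?_⟩
  · rw [FEset_eq k hk]
    exact congrArg _ hspan_eq
  · rw [finrank_span_eq_card hind, Fintype.card_fin]

end
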